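/- Let m ≥ 1, let D ⊆ ℂ^m be open, let P ⊆ ℂ^m be open and convex, let H : P × D → ℂ be holomorphic, and let c₀ ∈ ℂ. Suppose S_a, S_b : D → ℂ are holomorphic with ∇S_a(q), ∇S_b(q) ∈ P for all q ∈ D, and both solve the Hamilton–Jacobi equation H(∇S_a(q), q) = c₀ and H(∇S_b(q), q) = c₀ on D. Then the difference 𝔖 := S_a − S_b satisfies the homogeneous linear first-order partial differential equation Σ_{j=1}^m A_j(q) ∂𝔖/∂q_j (q) = 0 on D, where A_j(q) = ∫_0^1 (∂H/∂p_j)(∇S_b(q) + t(∇S_a(q) − ∇S_b(q)), q) dt. -/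

import Mathlib

open scoped BigOperators

noncomputable section

/-- The (complex) gradient of a function `S : ℂ^m → ℂ`: the vector of partial
derivatives `(∂S/∂q_1, …, ∂S/∂q_m)`. -/
def cgrad {m : ℕ} (S : (Fin m → ℂ) → ℂ) (q : Fin m → ℂ) : Fin m → ℂ :=
  fun j => fderiv ℂ S q (Pi.single j 1)

/-- Lemma 4.2 (identity for the splitting potential): if `S_a` and `S_b` are two
holomorphic solutions of the same Hamilton–Jacobi equation `H(∇S, q) = c₀` on `D`
with gradients in the open convex set `P`, then `𝔖 = S_a − S_b` satisfies a
homogeneous linear first-order PDE `Σ_j A_j(q) ∂𝔖/∂q_j = 0`, where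
`A_j(q) = ∫₀¹ (∂H/∂p_j)(∇S_b(q) + t(∇S_a(q) − ∇S_b(q)), q) dt`. -/
theorem hamilton_jacobi_difference (m : ℕ) (hm : 1 ≤ m)
    (D P : Set (Fin m → ℂ)) (hD : IsOpen D) (hP : IsOpen P) (hPc : Convex ℝ P)
    (H : (Fin m → ℂ) × (Fin m → ℂ) → ℂ)
    (hH : DifferentiableOn ℂ H (P ×ˢ D))
    (c₀ : ℂ)
    (Sa Sb : (Fin m → ℂ) → ℂ)
    (hSa : DifferentiableOn ℂ Sa D) (hSb : DifferentiableOn ℂ Sb D)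
    (hga : ∀ q ∈ D, cgrad Sa q ∈ P)
    (hgb : ∀ q ∈ D, cgrad Sb q ∈ P)
    (hHJa : ∀ q ∈ D, H (cgrad Sa q, q) = c₀)
    (hHJb : ∀ q ∈ D, H (cgrad Sb q, q) = c₀) :
    ∀ q ∈ D,
      (∑ j : Fin m,
        (∫ t in (0 : ℝ)..1,
          fderiv ℂ H
            (cgrad Sb q + (t : ℂ) • (cgrad Sa q - cgrad Sb q), q)
            (Pi.single j 1, (0 : Fin m → ℂ))) *
        fderiv ℂ (fun q' => Sa q' - Sb q') q (Pi.single j 1)) = 0 := by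
  intro q hq
  have hqD : D ∈ nhds q := hD.mem_nhds hq
  have hSa' : DifferentiableAt ℂ Sa q := (hSa q hq).differentiableAt hqD
  have hSb' : DifferentiableAt ℂ Sb q := (hSb q hq).differentiableAt hqD
  set pa := cgrad Sa q with hpa
  set pb := cgrad Sb q with hpb
  set Δ := pa - pb with hΔ
  have hopen : IsOpen (P ×ˢ D) := hP.prod hD
  -- the segment curve
  set c : ℝ → (Fin m → ℂ) × (Fin m → ℂ) := fun t => (pb + (t : ℂ) • Δ, q) with hc
  have hseg : ∀ t ∈ Set.Icc (0:ℝ) 1, pb + (t : ℂ) • Δ ∈ P := by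
    intro t ht
    have h1 : pb + (t : ℂ) • Δ = (1 - t) • pb + t • pa := by
      rw [Complex.coe_smul]
      module
    rw [h1]
    exact hPc (hgb q hq) (hga q hq) (by linarith [ht.2]) ht.1 (by ring)
  have hcmem : ∀ t ∈ Set.Icc (0:ℝ) 1, c t ∈ P ×ˢ D := fun t ht => ⟨hseg t ht, hq⟩
  have hcont_c : Continuous c := by
    apply Continuous.prodMk
    · exact continuous_const.add (Complex.continuous_ofReal.smul continuous_const)
    · exact continuous_const
  -- integrability of the directional derivatives along the curve, via Cauchy estimates
  have hInt : ∀ v : (Fin m → ℂ) × (Fin m → ℂ),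
      IntervalIntegrable (fun t : ℝ => fderiv ℂ H (c t) v) MeasureTheory.volume 0 1 := by
    intro v
    -- compact image of the curve
    have hK : IsCompact (c '' Set.Icc 0 1) := (isCompact_Icc).image hcont_c
    have hKU : c '' Set.Icc 0 1 ⊆ P ×ˢ D := by
      rintro _ ⟨t, ht, rfl⟩; exact hcmem t ht
    obtain ⟨δ, hδ, hδU⟩ := hK.exists_cthickening_subset_open hopen hKU
    -- bound H on the cthickening
    have hK' : IsCompact (Metric.cthickening δ (c '' Set.Icc 0 1)) := hK.cthickening
    obtain ⟨M, hM⟩ := hK'.exists_bound_of_continuousOn ((hH.continuousOn).mono hδU)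
    set ρ : ℝ := δ / (‖v‖ + 1) with hρdef
    have hv1 : (0:ℝ) < ‖v‖ + 1 := by positivity
    have hρ : 0 < ρ := div_pos hδ hv1
    -- pointwise bound on the directional derivative
    have hbound : ∀ t ∈ Set.Icc (0:ℝ) 1, ‖fderiv ℂ H (c t) v‖ ≤ M / ρ := by
      intro t ht
      set x := c t with hx
      have hxK : x ∈ c '' Set.Icc 0 1 := ⟨t, ht, rfl⟩
      set g : ℂ → ℂ := fun z => H (x + z • v) with hg
      -- points of the closed ball land in the cthickening, hence in P ×ˢ D
      have hball : ∀ z : ℂ, z ∈ Metric.closedBall (0:ℂ) ρ →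
          x + z • v ∈ Metric.cthickening δ (c '' Set.Icc 0 1) := by
        intro z hz
        apply Metric.mem_cthickening_of_dist_le (x + z • v) x δ _ hxK
        have : dist (x + z • v) x = ‖z • v‖ := by
          rw [dist_eq_norm]; congr 1; abel
        rw [this, norm_smul]
        have hzρ : ‖z‖ ≤ ρ := mem_closedBall_zero_iff.mp hz
        calc ‖z‖ * ‖v‖ ≤ ρ * (‖v‖ + 1) :=
              mul_le_mul hzρ (by linarith) (norm_nonneg v) hρ.le
          _ = δ := by rw [hρdef]; exact div_mul_cancel₀ δ hv1.ne'
      have hgd : DifferentiableOn ℂ g (Metric.closedBall (0:ℂ) ρ) := by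
        intro z hz
        have hmemU : x + z • v ∈ P ×ˢ D := hδU (hball z hz)
        have hHd : DifferentiableAt ℂ H (x + z • v) :=
          (hH _ hmemU).differentiableAt (hopen.mem_nhds hmemU)
        exact (hHd.comp z ((differentiableAt_id.smul_const v).const_add x)).differentiableWithinAt
      have hdc : DiffContOnCl ℂ g (Metric.ball (0:ℂ) ρ) := by
        refine ⟨hgd.mono Metric.ball_subset_closedBall, ?_⟩
        rw [closure_ball (0:ℂ) hρ.ne']
        exact hgd.continuousOn
      have hgderiv : deriv g 0 = fderiv ℂ H x v := by
        have hmemU : x ∈ P ×ˢ D := hKU hxK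
        have hHd : DifferentiableAt ℂ H x :=
          (hH _ hmemU).differentiableAt (hopen.mem_nhds hmemU)
        have haff : HasDerivAt (fun z : ℂ => x + z • v) v 0 := by
          simpa using ((hasDerivAt_id (0:ℂ)).smul_const v).const_add x
        have hHd' : HasFDerivAt H (fderiv ℂ H x) ((0:ℂ) • v + x) := by
          simpa using hHd.hasFDerivAt
        have haff' : HasDerivAt (fun z : ℂ => z • v + x) v 0 := by
          simpa using ((hasDerivAt_id (0:ℂ)).smul_const v).add_const x
        have : HasDerivAt (fun z : ℂ => H (z • v + x)) (fderiv ℂ H x v) 0 :=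
          hHd'.comp_hasDerivAt 0 haff'
        have heq : g = fun z : ℂ => H (z • v + x) := by
          funext z; simp [hg, add_comm]
        rw [heq]
        exact this.deriv
      have := Complex.norm_deriv_le_of_forall_mem_sphere_norm_le hρ hdc
        (C := M) (fun z hz => hM _ (hball z (Metric.sphere_subset_closedBall hz)))
      rw [hgderiv] at this
      exact this
    -- measurability
    have hmeas : Measurable (fun t : ℝ => fderiv ℂ H (c t) v) :=
      (measurable_fderiv_apply_const ℂ H v).comp hcont_c.measurable
    rw [intervalIntegrable_iff]
    refine MeasureTheory.Integrable.mono' (g := fun _ : ℝ => M / ρ)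
      (MeasureTheory.integrableOn_const (C := M / ρ) (by simp [Set.uIoc_of_le (zero_le_one (α := ℝ))]))
      hmeas.aestronglyMeasurable.restrict ?_
    rw [MeasureTheory.ae_restrict_iff' measurableSet_uIoc]
    refine MeasureTheory.ae_of_all _ fun t ht => ?_
    rw [Set.uIoc_of_le (zero_le_one (α := ℝ))] at ht
    exact hbound t ⟨ht.1.le, ht.2⟩
  -- derivative of t ↦ H (c t)
  have hderiv : ∀ t ∈ Set.uIcc (0:ℝ) 1,
      HasDerivAt (fun t => H (c t)) (fderiv ℂ H (c t) (Δ, 0)) t := by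
    intro t ht
    rw [Set.uIcc_of_le (by norm_num)] at ht
    have hmem := hcmem t ht
    have hHd : DifferentiableAt ℂ H (c t) :=
      (hH (c t) hmem).differentiableAt (hopen.mem_nhds hmem)
    have hc1 : HasDerivAt (fun s : ℝ => pb + (s : ℂ) • Δ) Δ t := by
      have h0 : HasDerivAt (fun s : ℝ => (s : ℂ)) 1 t := Complex.ofRealCLM.hasDerivAt
      have := (h0.smul_const Δ).const_add pb
      simpa using this
    have hcd : HasDerivAt c (Δ, (0 : Fin m → ℂ)) t := hc1.prodMk (hasDerivAt_const t q)
    have := (hHd.hasFDerivAt.restrictScalars ℝ).comp_hasDerivAt t hcd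
    simp at this; exact this
  have hFTC : (∫ t in (0:ℝ)..1, fderiv ℂ H (c t) (Δ, 0)) = 0 := by
    rw [intervalIntegral.integral_eq_sub_of_hasDerivAt hderiv (hInt (Δ, 0))]
    have e1 : H (c 1) = c₀ := by
      have : c 1 = (pa, q) := by
        simp only [hc, Complex.ofReal_one, one_smul, hΔ]
        rw [Prod.ext_iff]
        exact ⟨by module, rfl⟩
      rw [this, hpa]; exact hHJa q hq
    have e0 : H (c 0) = c₀ := by
      have : c 0 = (pb, q) := by simp [hc]
      rw [this, hpb]; exact hHJb q hq
    rw [e1, e0, sub_self]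
  -- expand (Δ, 0) in the basis
  have hbasis : (Δ, (0 : Fin m → ℂ)) =
      ∑ j : Fin m, Δ j • ((Pi.single j 1 : Fin m → ℂ), (0 : Fin m → ℂ)) := by
    rw [Prod.ext_iff]
    constructor
    · rw [Prod.fst_sum]
      funext k
      simp [Finset.sum_apply, Pi.single_apply]
    · rw [Prod.snd_sum]
      simp
  have hexpand : ∀ t : ℝ, fderiv ℂ H (c t) (Δ, 0) =
      ∑ j : Fin m, Δ j * fderiv ℂ H (c t) ((Pi.single j 1 : Fin m → ℂ), 0) := by
    intro t
    rw [hbasis, map_sum]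
    refine Finset.sum_congr rfl fun j _ => ?_
    rw [map_smul, smul_eq_mul]
  -- fderiv of the difference
  have hfd : ∀ j, fderiv ℂ (fun q' => Sa q' - Sb q') q (Pi.single j 1) = Δ j := by
    intro j
    rw [fderiv_fun_sub hSa' hSb']
    simp [hΔ, hpa, hpb, cgrad]
  calc (∑ j : Fin m,
        (∫ t in (0 : ℝ)..1, fderiv ℂ H (c t) (Pi.single j 1, (0 : Fin m → ℂ))) *
        fderiv ℂ (fun q' => Sa q' - Sb q') q (Pi.single j 1))
      = ∑ j : Fin m, ∫ t in (0:ℝ)..1,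
          Δ j * fderiv ℂ H (c t) ((Pi.single j 1 : Fin m → ℂ), 0) := by
        refine Finset.sum_congr rfl fun j _ => ?_
        rw [hfd j, intervalIntegral.integral_const_mul, mul_comm]
    _ = ∫ t in (0:ℝ)..1, ∑ j : Fin m,
          Δ j * fderiv ℂ H (c t) ((Pi.single j 1 : Fin m → ℂ), 0) := by
        rw [intervalIntegral.integral_finset_sum]
        intro j _
        exact (hInt _).const_mul _
    _ = ∫ t in (0:ℝ)..1, fderiv ℂ H (c t) (Δ, 0) := by
        refine intervalIntegral.integral_congr fun t _ => ?_
        rw [hexpand t]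
    _ = 0 := hFTC
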